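/- Let F be an m×n complex matrix, and let R be an n×n Hermitian positive semidefinite matrix of rank m with F·R·F* positive definite (invertible). Define β̂ = Tr((F·R·F*)^{1/2}) / Tr(R), which is a positive real number, and set Φ̂ = β̂·(F·R·F*)^{-1/2}·F·R. Then Φ̂*·Φ̂ = β̂²·R, and for every real β > 0 and every m×n complex matrix Φ satisfying Φ*·Φ = β²·R, the Frobenius-norm error satisfies ‖Φ̂ − F‖_F ≤ ‖Φ − F‖_F. That is, Φ̂ is the constrained least-squares matrix closest to F whose Gram matrix is a positive multiple of R, with optimal scaling β̂. -/

import Mathlib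

open Matrix
open scoped ComplexOrder

lemma psd_fact {n m : ℕ} (R : Matrix (Fin n) (Fin n) ℂ) (hR : R.PosSemidef)
    (hrank : R.rank = m) : ∃ C : Matrix (Fin m) (Fin n) ℂ, Cᴴ * C = R := by
  classical
  have hH := hR.1
  have hcard : Fintype.card {i // hH.eigenvalues i ≠ 0} = m := by
    rw [← hH.rank_eq_card_non_zero_eigs, hrank]
  let e : {i // hH.eigenvalues i ≠ 0} ≃ Fin m := Fintype.equivFinOfCardEq hcard
  set U : Matrix (Fin n) (Fin n) ℂ := (hH.eigenvectorUnitary : Matrix (Fin n) (Fin n) ℂ) with hU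
  set C : Matrix (Fin m) (Fin n) ℂ :=
    fun k j => (Real.sqrt (hH.eigenvalues (e.symm k)) : ℂ) * star (U j (e.symm k)) with hC
  refine ⟨C, ?_⟩
  have hspec := hH.spectral_theorem
  ext i j
  set g : Fin n → ℂ := fun l => U i l * (hH.eigenvalues l : ℂ) * star (U j l) with hg
  have h1 : R i j = ∑ l, g l := by
    conv_lhs => rw [hspec, Unitary.conjStarAlgAut_apply]
    simp only [Unitary.coe_star, Matrix.mul_apply, Matrix.star_apply, ← hU, Matrix.diagonal_apply,
      Function.comp_apply, ite_mul, zero_mul, Finset.sum_ite_eq, Finset.mem_univ, if_pos, hg]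
    simp [Complex.real_smul]
  have h2 : ∀ k : Fin m, star (C k i) * C k j = g (e.symm k) := by
    intro k
    have hnn := hR.eigenvalues_nonneg (e.symm k).1
    simp only [hC, hg, star_mul', star_star, Complex.star_def, Complex.conj_ofReal]
    rw [show ∀ a b c : ℂ, a * b * (a * c) = (a*a) * (b * c) from fun a b c => by ring,
      ← Complex.ofReal_mul, Real.mul_self_sqrt hnn]
    simp only [Complex.conj_conj]
    ring
  calc (Cᴴ * C) i j = ∑ k, star (C k i) * C k j := by
        simp [Matrix.mul_apply, Matrix.conjTranspose_apply]
    _ = ∑ k : Fin m, g (e.symm k) := Finset.sum_congr rfl (fun k _ => h2 k)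
    _ = ∑ l : {i // hH.eigenvalues i ≠ 0}, g l.1 := Equiv.sum_comp e.symm (fun l => g l.1)
    _ = ∑ l ∈ Finset.univ.filter (fun l => hH.eigenvalues l ≠ 0), g l :=
        (Finset.sum_subtype _ (by intro x; simp) g).symm
    _ = ∑ l, g l := by
        rw [Finset.sum_filter]
        apply Finset.sum_congr rfl
        intro l _
        split_ifs with h
        · rfl
        · push_neg at h; simp [hg, h]
    _ = R i j := h1.symm
lemma trace_sandwich {m : ℕ} (Q W : Matrix (Fin m) (Fin m) ℂ) (hQ : Qᴴ = Q)
    (hW : Wᴴ * W = 1) : (trace (Q * W * Q)).re ≤ (trace (Q * Q)).re := by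
  rw [Matrix.trace, Matrix.trace, Complex.re_sum, Complex.re_sum]
  apply Finset.sum_le_sum
  intro i _
  set v : Fin m → ℂ := fun k => Q k i with hv
  set w : Fin m → ℂ := W *ᵥ v with hw
  have hQsym : ∀ a b, Q a b = star (Q b a) := by
    intro a b; conv_lhs => rw [← hQ, Matrix.conjTranspose_apply]
  have h1 : (Q * W * Q) i i = star v ⬝ᵥ w := by
    simp only [Matrix.mul_apply, dotProduct, hw, Matrix.mulVec,
      dotProduct, Finset.sum_mul, Finset.mul_sum, Pi.star_apply, hv]
    rw [Finset.sum_comm]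
    apply Finset.sum_congr rfl; intro l _
    apply Finset.sum_congr rfl; intro k _
    rw [hQsym i l]; ring
  have h2 : (Q * Q) i i = star v ⬝ᵥ v := by
    simp only [Matrix.mul_apply, dotProduct, Pi.star_apply, hv]
    apply Finset.sum_congr rfl; intro k _
    rw [hQsym i k]
  have hww : star w ⬝ᵥ w = star v ⬝ᵥ v := by
    rw [hw, Matrix.star_mulVec, dotProduct_mulVec, Matrix.vecMul_vecMul, hW,
      Matrix.vecMul_one]
  have hvre : (star v ⬝ᵥ v).re = ∑ k, ‖v k‖ ^ 2 := by
    rw [dotProduct, Complex.re_sum]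
    apply Finset.sum_congr rfl; intro k _
    simp [Complex.star_def, ← Complex.normSq_eq_norm_sq, Complex.normSq_apply, Complex.normSq,
      Complex.mul_re]
  have hwre : (star w ⬝ᵥ w).re = ∑ k, ‖w k‖ ^ 2 := by
    rw [dotProduct, Complex.re_sum]
    apply Finset.sum_congr rfl; intro k _
    simp [Complex.star_def, ← Complex.normSq_eq_norm_sq, Complex.normSq_apply, Complex.normSq,
      Complex.mul_re]
  have hsum : ∑ k, ‖w k‖ ^ 2 = ∑ k, ‖v k‖ ^ 2 := by rw [← hvre, ← hwre, hww]
  simp only [Matrix.diag_apply]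
  rw [h1, h2, hvre]
  -- re (star v ⬝ᵥ w) ≤ ∑ ‖v k‖ ‖w k‖
  have step1 : (star v ⬝ᵥ w).re ≤ ∑ k, ‖v k‖ * ‖w k‖ := by
    rw [dotProduct, Complex.re_sum]
    apply Finset.sum_le_sum
    intro k _
    calc (star (v k) * w k).re ≤ ‖star (v k) * w k‖ := Complex.re_le_norm _
      _ = ‖v k‖ * ‖w k‖ := by
          rw [norm_mul]; simp
  refine step1.trans ?_
  have cs := Finset.sum_mul_sq_le_sq_mul_sq Finset.univ (fun k => ‖v k‖) (fun k => ‖w k‖)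
  have hnn : (0:ℝ) ≤ ∑ k, ‖v k‖ * ‖w k‖ :=
    Finset.sum_nonneg fun k _ => mul_nonneg (norm_nonneg _) (norm_nonneg _)
  have hS : (∑ k, ‖v k‖ * ‖w k‖)^2 ≤ (∑ k, ‖v k‖^2)^2 := by
    calc (∑ k, ‖v k‖ * ‖w k‖)^2 ≤ (∑ k, ‖v k‖^2) * ∑ k, ‖w k‖^2 := cs
      _ = (∑ k, ‖v k‖^2)^2 := by rw [hsum, sq]
  have := Real.sqrt_le_sqrt hS
  rwa [Real.sqrt_sq hnn, Real.sqrt_sq (Finset.sum_nonneg fun k _ => sq_nonneg _)] at this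
lemma key_identity {m n : ℕ} (F : Matrix (Fin m) (Fin n) ℂ) (R : Matrix (Fin n) (Fin n) ℂ)
    (hR : R.PosSemidef) (hrank : R.rank = m) (hPD : (F * R * Fᴴ).PosDef)
    (C : Matrix (Fin m) (Fin n) ℂ) (hC : Cᴴ * C = R) :
    R * Fᴴ * (F * R * Fᴴ)⁻¹ * F * R = R := by
  set E : Matrix (Fin m) (Fin m) ℂ := F * Cᴴ with hE
  have hA : F * R * Fᴴ = E * Eᴴ := by
    rw [hE, conjTranspose_mul, conjTranspose_conjTranspose, ← hC]
    simp only [Matrix.mul_assoc]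
  have hdet : IsUnit E.det := by
    have h0 : IsUnit (F * R * Fᴴ).det := (Matrix.isUnit_iff_isUnit_det _).mp hPD.isUnit
    rw [hA, Matrix.det_mul] at h0
    exact isUnit_of_mul_isUnit_left h0
  have hdetH : IsUnit Eᴴ.det := by rw [Matrix.det_conjTranspose]; exact hdet.star
  have h1 : Eᴴ * Eᴴ⁻¹ = 1 := Matrix.mul_nonsing_inv _ hdetH
  have h2 : E⁻¹ * E = 1 := Matrix.nonsing_inv_mul _ hdet
  have hCF : C * Fᴴ = Eᴴ := by rw [hE, conjTranspose_mul, conjTranspose_conjTranspose]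
  rw [hA, Matrix.mul_inv_rev, ← hC]
  calc Cᴴ * C * Fᴴ * (Eᴴ⁻¹ * E⁻¹) * F * (Cᴴ * C)
      = Cᴴ * ((C * Fᴴ) * Eᴴ⁻¹) * ((E⁻¹ * (F * Cᴴ)) * C) := by simp only [Matrix.mul_assoc]
    _ = Cᴴ * C := by rw [hCF, ← hE, h1, h2, Matrix.mul_one, Matrix.one_mul]
lemma err_expand {m n : ℕ} (X F : Matrix (Fin m) (Fin n) ℂ) :
    ∑ i, ∑ j, ‖X i j - F i j‖ ^ 2 =
      (trace (Xᴴ * X)).re - 2 * (trace (X * Fᴴ)).re + ∑ i, ∑ j, ‖F i j‖ ^ 2 := by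
  have habs : ∀ z : ℂ, ‖z‖ ^ 2 = Complex.normSq z := by
    intro z; rw [Complex.sq_norm]
  have h1 : (trace (Xᴴ * X)).re = ∑ i, ∑ j, ‖X i j‖ ^ 2 := by
    rw [Matrix.trace, Complex.re_sum, Finset.sum_comm]
    apply Finset.sum_congr rfl; intro i _
    simp only [Matrix.diag_apply, Matrix.mul_apply, Matrix.conjTranspose_apply, Complex.re_sum]
    apply Finset.sum_congr rfl; intro j _
    rw [habs]
    simp [Complex.star_def, Complex.normSq_apply, Complex.mul_re]
  have h2 : (trace (X * Fᴴ)).re = ∑ i, ∑ j, (X i j * star (F i j)).re := by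
    rw [Matrix.trace, Complex.re_sum]
    apply Finset.sum_congr rfl; intro i _
    simp only [Matrix.diag_apply, Matrix.mul_apply, Matrix.conjTranspose_apply, Complex.re_sum]
  have key : ∀ i j, ‖X i j - F i j‖ ^ 2 =
      ‖X i j‖ ^ 2 - 2 * (X i j * star (F i j)).re + ‖F i j‖ ^ 2 := by
    intro i j
    rw [habs, habs, habs, Complex.normSq_sub]
    simp [Complex.star_def]
    ring
  rw [h1, h2]
  simp only [key, Finset.sum_add_distrib, Finset.sum_sub_distrib, ← Finset.mul_sum]

lemma trace_bound {m n : ℕ} (F Φ : Matrix (Fin m) (Fin n) ℂ)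
    (R : Matrix (Fin n) (Fin n) ℂ) (T₁ : Matrix (Fin m) (Fin m) ℂ)
    (hT₁ : T₁.PosDef) (hT₁sq : T₁ * T₁ = F * R * Fᴴ)
    (β : ℝ) (hβ : 0 < β) (hΦ : Φᴴ * Φ = ((β : ℂ) ^ 2) • R) :
    (trace (Φ * Fᴴ)).re ≤ β * (T₁.trace).re := by
  classical
  obtain ⟨Q, hQH, hQQ⟩ : ∃ Q : Matrix (Fin m) (Fin m) ℂ, Qᴴ = Q ∧ Q * Q = T₁ := by
    open scoped MatrixOrder in
    obtain ⟨X, hX, -, h⟩ := CFC.exists_sqrt_of_isSelfAdjoint_of_quasispectrumRestricts hT₁.1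
      (QuasispectrumRestricts.nnreal_of_nonneg hT₁.posSemidef.nonneg)
    exact ⟨X, hX, h⟩
  have hdet : IsUnit T₁.det := (Matrix.isUnit_iff_isUnit_det _).mp hT₁.isUnit
  have hTinv : T₁⁻¹ * T₁ = 1 := Matrix.nonsing_inv_mul _ hdet
  have hTinv' : T₁ * T₁⁻¹ = 1 := Matrix.mul_nonsing_inv _ hdet
  have hTH : T₁ᴴ = T₁ := hT₁.1
  have hTinvH : (T₁⁻¹)ᴴ = T₁⁻¹ := by rw [Matrix.conjTranspose_nonsing_inv, hTH]
  set M : Matrix (Fin m) (Fin m) ℂ := Φ * Fᴴ with hM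
  have hMM : Mᴴ * M = ((β : ℂ) ^ 2) • (T₁ * T₁) := by
    rw [hM, conjTranspose_mul, conjTranspose_conjTranspose, hT₁sq]
    calc F * Φᴴ * (Φ * Fᴴ) = F * (Φᴴ * Φ) * Fᴴ := by simp only [Matrix.mul_assoc]
      _ = ((β : ℂ) ^ 2) • (F * R * Fᴴ) := by
          rw [hΦ, Matrix.mul_smul, Matrix.smul_mul]
  set W : Matrix (Fin m) (Fin m) ℂ := ((β : ℂ)⁻¹) • (M * T₁⁻¹) with hW
  have hβne : (β : ℂ) ≠ 0 := by exact_mod_cast (Complex.ofReal_ne_zero.mpr hβ.ne')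
  have hWW : Wᴴ * W = 1 := by
    rw [hW, Matrix.conjTranspose_smul, Matrix.conjTranspose_mul, hTinvH]
    rw [Matrix.smul_mul, Matrix.mul_smul, smul_smul]
    have : T₁⁻¹ * Mᴴ * (M * T₁⁻¹) = T₁⁻¹ * (Mᴴ * M) * T₁⁻¹ := by simp only [Matrix.mul_assoc]
    rw [this, hMM]
    rw [Matrix.mul_smul, Matrix.smul_mul, smul_smul]
    have h2 : T₁⁻¹ * (T₁ * T₁) * T₁⁻¹ = 1 := by
      calc T₁⁻¹ * (T₁ * T₁) * T₁⁻¹ = (T₁⁻¹ * T₁) * (T₁ * T₁⁻¹) := by simp only [Matrix.mul_assoc]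
        _ = 1 := by rw [hTinv, hTinv', Matrix.one_mul]
    rw [h2]
    have : star ((β:ℂ)⁻¹) * (β:ℂ)⁻¹ * (β:ℂ)^2 = 1 := by
      rw [Complex.star_def, ← Complex.ofReal_inv, Complex.conj_ofReal, Complex.ofReal_inv]
      field_simp
    rw [this, one_smul]
  have hMW : (β : ℂ) • (W * T₁) = M := by
    rw [hW, Matrix.smul_mul, smul_smul, mul_inv_cancel₀ hβne, one_smul, Matrix.mul_assoc,
      hTinv, Matrix.mul_one]
  have hcyc : trace (W * T₁) = trace (Q * W * Q) := by
    rw [← hQQ, ← Matrix.mul_assoc, Matrix.trace_mul_comm (W * Q) Q, ← Matrix.mul_assoc]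
  calc (trace M).re = β * (trace (Q * W * Q)).re := by
        rw [← hMW, Matrix.trace_smul, hcyc, smul_eq_mul, Complex.re_ofReal_mul]
      _ ≤ β * (trace (Q * Q)).re := by
        have := trace_sandwich Q W hQH hWW
        exact mul_le_mul_of_nonneg_left this hβ.le
      _ = β * (T₁.trace).re := by rw [hQQ]

/-- Constrained least-squares matrix with Gram matrix prescribed up to
scale. Let `F` be `m×n`, `R` an `n×n` Hermitian positive semidefinite matrix of rank `m`
with `F·R·F*` positive definite, `T₁ = (F·R·F*)^{1/2}` the unique Hermitian positive
definite square root, and `β̂ = Tr((F·R·F*)^{1/2})/Tr(R) > 0`. Then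
`Φ̂ = β̂·(F·R·F*)^{-1/2}·F·R = β̂·T₁⁻¹·F·R` satisfies `Φ̂*·Φ̂ = β̂²·R` and minimizes
the (squared) Frobenius-norm error `‖Φ − F‖_F²` among all `Φ` with `Φ*·Φ = β²·R` for
some real `β > 0`. -/
theorem stmt_18 {m n : ℕ} (hm : 0 < m)
    (F : Matrix (Fin m) (Fin n) ℂ)
    (R : Matrix (Fin n) (Fin n) ℂ)
    (hR : R.PosSemidef)
    (hrank : R.rank = m)
    (hPD : (F * R * Fᴴ).PosDef)
    (T₁ : Matrix (Fin m) (Fin m) ℂ)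
    (hT₁ : T₁.PosDef)
    (hT₁sq : T₁ * T₁ = F * R * Fᴴ)
    (βhat : ℝ)
    (hβhat : βhat = (T₁.trace).re / (R.trace).re)
    (Φhat : Matrix (Fin m) (Fin n) ℂ)
    (hΦhat : Φhat = (βhat : ℂ) • (T₁⁻¹ * F * R)) :
    0 < βhat ∧
    Φhatᴴ * Φhat = ((βhat : ℂ) ^ 2) • R ∧
    ∀ (β : ℝ), 0 < β →
      ∀ Φ : Matrix (Fin m) (Fin n) ℂ, Φᴴ * Φ = ((β : ℂ) ^ 2) • R →
        ∑ i, ∑ j, ‖Φhat i j - F i j‖ ^ 2 ≤ ∑ i, ∑ j, ‖Φ i j - F i j‖ ^ 2 := by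
  classical
  have hH := hR.1
  have hRH : Rᴴ = R := hR.1
  have hTH : T₁ᴴ = T₁ := hT₁.1
  have hdetT : IsUnit T₁.det := (Matrix.isUnit_iff_isUnit_det _).mp hT₁.isUnit
  have hTinv : T₁⁻¹ * T₁ = 1 := Matrix.nonsing_inv_mul _ hdetT
  have hTinvH : (T₁⁻¹)ᴴ = T₁⁻¹ := by rw [Matrix.conjTranspose_nonsing_inv, hTH]
  -- positivity of traces
  have hNe : Nonempty (Fin m) := ⟨⟨0, hm⟩⟩
  have htT : 0 < (T₁.trace).re := by
    rw [Matrix.trace, Complex.re_sum]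
    apply Finset.sum_pos _ Finset.univ_nonempty
    intro i _
    have hx : (Pi.single i 1 : Fin m → ℂ) ≠ 0 := by
      intro h
      have := congrFun h i
      simp at this
    have hpos := hT₁.dotProduct_mulVec_pos hx
    have heq : star (Pi.single i 1 : Fin m → ℂ) ⬝ᵥ T₁ *ᵥ (Pi.single i 1) = T₁ i i := by
      simp [dotProduct, Matrix.mulVec, Pi.single_apply, Finset.sum_ite_eq,
        Matrix.diag_apply, apply_ite]
    rw [heq] at hpos
    exact (Complex.lt_def.mp hpos).1
  have htR : 0 < (R.trace).re := by
    have hu : star (hH.eigenvectorUnitary : Matrix (Fin n) (Fin n) ℂ) *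
        (hH.eigenvectorUnitary : Matrix (Fin n) (Fin n) ℂ) = 1 :=
      (Matrix.mem_unitaryGroup_iff').mp hH.eigenvectorUnitary.2
    have htrR : R.trace = ∑ i, (hH.eigenvalues i : ℂ) := by
      conv_lhs => rw [hH.spectral_theorem]
      simp only [Unitary.conjStarAlgAut_apply, Unitary.coe_star]
      rw [Matrix.trace_mul_cycle, hu, Matrix.one_mul, Matrix.trace_diagonal]
      simp
    rw [htrR, Complex.re_sum]
    simp only [Complex.ofReal_re]
    have hcard : Fintype.card {i // hH.eigenvalues i ≠ 0} = m := by
      rw [← hH.rank_eq_card_non_zero_eigs, hrank]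
    have : Nonempty {i // hH.eigenvalues i ≠ 0} := by
      rw [← Fintype.card_pos_iff, hcard]; exact hm
    obtain ⟨i0, hi0⟩ := this
    exact Finset.sum_pos' (fun i _ => hR.eigenvalues_nonneg i)
      ⟨i0, Finset.mem_univ _, lt_of_le_of_ne (hR.eigenvalues_nonneg i0) (Ne.symm hi0)⟩
  have hβ0 : 0 < βhat := by rw [hβhat]; exact div_pos htT htR
  -- part 2
  obtain ⟨C, hC⟩ := psd_fact R hR hrank
  have hkey := key_identity F R hR hrank hPD C hC
  have part2 : Φhatᴴ * Φhat = ((βhat : ℂ) ^ 2) • R := by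
    have hmid : (T₁⁻¹ * F * R)ᴴ * (T₁⁻¹ * F * R) = R * Fᴴ * (F * R * Fᴴ)⁻¹ * F * R := by
      rw [conjTranspose_mul, conjTranspose_mul, hTinvH, hRH, ← hT₁sq, Matrix.mul_inv_rev]
      simp only [Matrix.mul_assoc]
    rw [hΦhat, Matrix.conjTranspose_smul, Matrix.smul_mul, Matrix.mul_smul, smul_smul,
      hmid, hkey, Complex.star_def, Complex.conj_ofReal, ← sq]
  refine ⟨hβ0, part2, ?_⟩
  -- part 3
  intro β hβ Φ hΦc
  have hexpΦ := err_expand Φ F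
  have hexpΦhat := err_expand Φhat F
  have htrΦ : (trace (Φᴴ * Φ)).re = β ^ 2 * (R.trace).re := by
    rw [hΦc, Matrix.trace_smul, smul_eq_mul, ← Complex.ofReal_pow, Complex.re_ofReal_mul]
  have htrΦhat : (trace (Φhatᴴ * Φhat)).re = βhat ^ 2 * (R.trace).re := by
    rw [part2, Matrix.trace_smul, smul_eq_mul, ← Complex.ofReal_pow, Complex.re_ofReal_mul]
  have hcross : (trace (Φhat * Fᴴ)).re = βhat * (T₁.trace).re := by
    have hm1 : T₁⁻¹ * F * R * Fᴴ = T₁ := by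
      rw [Matrix.mul_assoc, Matrix.mul_assoc, ← Matrix.mul_assoc F R Fᴴ, ← hT₁sq,
        ← Matrix.mul_assoc, hTinv, Matrix.one_mul]
    rw [hΦhat, Matrix.smul_mul, hm1, Matrix.trace_smul, smul_eq_mul, Complex.re_ofReal_mul]
  have hbound : (trace (Φ * Fᴴ)).re ≤ β * (T₁.trace).re :=
    trace_bound F Φ R T₁ hT₁ hT₁sq β hβ hΦc
  have hβtR : βhat * (R.trace).re = (T₁.trace).re := by
    rw [hβhat]; field_simp
  rw [hexpΦ, hexpΦhat, htrΦ, htrΦhat, hcross]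
  nlinarith [mul_nonneg htR.le (sq_nonneg (β - βhat)), hbound]
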